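/- Let s, λ ∈ ℝ and consider the system of ordinary differential equations x₁'(t) + x₁(t) − s·x₁(t) = λ·x₂(t), x₂'(t) − x₂(t) − s·x₂(t) = −λ·x₁(t) for t ∈ [0, 2π], with the periodic boundary conditions x₁(0) = x₁(2π) and x₂(0) = x₂(2π). Then: (i) there exists a differentiable solution (x₁, x₂) : ℝ → ℝ² of this boundary value problem not identically zero on [0, 2π] if and only if s² + λ² = 1, or s = 0 and λ² = 1 + n² for some positive integer n; (ii) if s ≠ 0, every differentiable solution of this boundary value problem is constant on [0, 2π]. -/

import Mathlib

open Real Set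

/-- Scalar complex linear ODE on an interval. -/
lemma exp_ode {u : ℝ → ℂ} (hu : Differentiable ℝ u) {μ : ℂ} {T : ℝ}
    (h : ∀ t ∈ Set.Icc 0 T, deriv u t = μ * u t) :
    ∀ t ∈ Set.Icc 0 T, u t = Complex.exp (μ * t) * u 0 := by
  have key : ∀ t ∈ Set.Icc 0 T, Complex.exp (-μ * t) * u t = Complex.exp (-μ * 0) * u 0 := by
    apply constant_of_has_deriv_right_zero
    · apply Continuous.continuousOn
      have : Continuous fun t : ℝ => Complex.exp (-μ * t) := by
        exact Complex.continuous_exp.comp (by continuity)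
      exact this.mul hu.continuous
    · intro x hx
      have hx' : x ∈ Set.Icc 0 T := Set.Ico_subset_Icc_self hx
      have h1 : HasDerivAt (fun τ : ℝ => -μ * (τ : ℂ)) (-μ) x := by
        simpa using (hasDerivAt_id x).ofReal_comp.const_mul (-μ)
      have h2 : HasDerivAt (fun τ : ℝ => Complex.exp (-μ * τ))
          (Complex.exp (-μ * x) * (-μ)) x := (Complex.hasDerivAt_exp (-μ * x)).comp x h1
      have h3 : HasDerivAt (fun τ : ℝ => Complex.exp (-μ * τ) * u τ)
          (Complex.exp (-μ * x) * (-μ) * u x + Complex.exp (-μ * x) * deriv u x) x :=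
        h2.mul (hu x).hasDerivAt
      rw [h x hx'] at h3
      have : Complex.exp (-μ * x) * -μ * u x + Complex.exp (-μ * x) * (μ * u x) = 0 := by ring
      rw [this] at h3
      exact h3.hasDerivWithinAt
  intro t ht
  have := key t ht
  simp only [mul_zero, Complex.ofReal_zero, Complex.exp_zero, one_mul] at this
  calc u t = Complex.exp (μ * t) * (Complex.exp (-μ * t) * u t) := by
        rw [← mul_assoc, ← Complex.exp_add]; ring_nf; simp
    _ = Complex.exp (μ * t) * u 0 := by rw [this]

lemma combo_ode (s lam : ℝ) {x₁ x₂ : ℝ → ℝ} (hd1 : Differentiable ℝ x₁)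
    (hd2 : Differentiable ℝ x₂)
    (h1 : ∀ t ∈ Set.Icc 0 (2 * π), deriv x₁ t = (s - 1) * x₁ t + lam * x₂ t)
    (h2 : ∀ t ∈ Set.Icc 0 (2 * π), deriv x₂ t = -lam * x₁ t + (s + 1) * x₂ t)
    (a b μ : ℂ) (hab1 : a * (s - 1) - b * lam = μ * a)
    (hab2 : a * lam + b * (s + 1) = μ * b) :
    ∀ t ∈ Set.Icc 0 (2 * π), a * (x₁ t : ℂ) + b * (x₂ t : ℂ) =
      Complex.exp (μ * t) * (a * (x₁ 0 : ℂ) + b * (x₂ 0 : ℂ)) := by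
  have hD : ∀ t : ℝ, HasDerivAt (fun τ : ℝ => a * (x₁ τ : ℂ) + b * (x₂ τ : ℂ))
      (a * ((deriv x₁ t : ℝ) : ℂ) + b * ((deriv x₂ t : ℝ) : ℂ)) t := fun t =>
    (((hd1 t).hasDerivAt.ofReal_comp.const_mul a).add
      ((hd2 t).hasDerivAt.ofReal_comp.const_mul b))
  apply exp_ode (fun t => (hD t).differentiableAt)
  intro t ht
  rw [(hD t).deriv, h1 t ht, h2 t ht]
  push_cast
  linear_combination (x₁ t : ℂ) * hab1 + (x₂ t : ℂ) * hab2

lemma exp_real_two_pi_eq_one_iff (r : ℝ) :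
    Complex.exp ((r : ℂ) * ((2 * π : ℝ) : ℂ)) = 1 ↔ r = 0 := by
  rw [← Complex.ofReal_mul, ← Complex.ofReal_exp, ← Complex.ofReal_one,
    Complex.ofReal_inj, Real.exp_eq_one_iff, mul_eq_zero]
  constructor
  · rintro (h | h)
    · exact h
    · exact absurd h (by positivity)
  · intro h; exact Or.inl h

lemma exp_ne_one_of_re_ne_zero {μ : ℂ} (hs : μ.re ≠ 0) :
    Complex.exp (μ * ((2 * π : ℝ) : ℂ)) ≠ 1 := by
  intro h
  have := congrArg norm h
  rw [Complex.norm_exp, norm_one, Real.exp_eq_one_iff] at this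
  have hre : (μ * ((2 * π : ℝ) : ℂ)).re = μ.re * (2 * π) := by
    simp [Complex.mul_re]
  rw [hre, mul_eq_zero] at this
  rcases this with h' | h'
  · exact hs h'
  · exact absurd h' (by positivity)

lemma exp_smul_I_two_pi_eq_one_iff (c : ℝ) :
    Complex.exp ((c : ℂ) * Complex.I * ((2 * π : ℝ) : ℂ)) = 1 ↔ ∃ n : ℤ, c = n := by
  rw [Complex.exp_eq_one_iff]
  constructor
  · rintro ⟨n, hn⟩
    refine ⟨n, ?_⟩
    have h2 : ((2 * π : ℝ) : ℂ) * Complex.I ≠ 0 := by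
      simp [Complex.I_ne_zero, Real.pi_ne_zero]
    have : (c : ℂ) * (((2 * π : ℝ) : ℂ) * Complex.I) = (n : ℂ) * (((2 * π : ℝ) : ℂ) * Complex.I) := by
      push_cast at hn ⊢; linear_combination hn
    have := mul_right_cancel₀ h2 this
    exact_mod_cast this
  · rintro ⟨n, rfl⟩
    exact ⟨n, by push_cast; ring⟩

lemma two_pi_mem : (2 * π) ∈ Set.Icc 0 (2 * π) := ⟨by positivity, le_refl _⟩
lemma zero_mem_pi : (0 : ℝ) ∈ Set.Icc 0 (2 * π) := ⟨le_refl _, by positivity⟩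

lemma sys_combo (s lam : ℝ) {x₁ x₂ : ℝ → ℝ} (hd1 : Differentiable ℝ x₁)
    (hd2 : Differentiable ℝ x₂)
    (heq1 : ∀ t ∈ Set.Icc 0 (2 * π), deriv x₁ t + x₁ t - s * x₁ t = lam * x₂ t)
    (heq2 : ∀ t ∈ Set.Icc 0 (2 * π), deriv x₂ t - x₂ t - s * x₂ t = -lam * x₁ t)
    (hp1 : x₁ 0 = x₁ (2 * π)) (hp2 : x₂ 0 = x₂ (2 * π))
    (a b μ : ℂ) (hab1 : a * (s - 1) - b * lam = μ * a)
    (hab2 : a * lam + b * (s + 1) = μ * b) :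
    (∀ t ∈ Set.Icc 0 (2 * π), a * (x₁ t : ℂ) + b * (x₂ t : ℂ) =
      Complex.exp (μ * t) * (a * (x₁ 0 : ℂ) + b * (x₂ 0 : ℂ))) ∧
    (Complex.exp (μ * ((2 * π : ℝ) : ℂ)) - 1) * (a * (x₁ 0 : ℂ) + b * (x₂ 0 : ℂ)) = 0 := by
  have h1 : ∀ t ∈ Set.Icc 0 (2 * π), deriv x₁ t = (s - 1) * x₁ t + lam * x₂ t := by
    intro t ht; have := heq1 t ht; linarith
  have h2 : ∀ t ∈ Set.Icc 0 (2 * π), deriv x₂ t = -lam * x₁ t + (s + 1) * x₂ t := by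
    intro t ht; have := heq2 t ht; linarith
  have hu := combo_ode s lam hd1 hd2 h1 h2 a b μ hab1 hab2
  refine ⟨hu, ?_⟩
  have h2π := hu (2 * π) two_pi_mem
  rw [← hp1, ← hp2] at h2π
  linear_combination -h2π

lemma sys_zero (s lam : ℝ) {x₁ x₂ : ℝ → ℝ} (hd1 : Differentiable ℝ x₁)
    (hd2 : Differentiable ℝ x₂)
    (heq1 : ∀ t ∈ Set.Icc 0 (2 * π), deriv x₁ t + x₁ t - s * x₁ t = lam * x₂ t)
    (heq2 : ∀ t ∈ Set.Icc 0 (2 * π), deriv x₂ t - x₂ t - s * x₂ t = -lam * x₁ t)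
    (hp1 : x₁ 0 = x₁ (2 * π)) (hp2 : x₂ 0 = x₂ (2 * π))
    (a b μ : ℂ) (hab1 : a * (s - 1) - b * lam = μ * a)
    (hab2 : a * lam + b * (s + 1) = μ * b)
    (hexp : Complex.exp (μ * ((2 * π : ℝ) : ℂ)) ≠ 1) :
    ∀ t ∈ Set.Icc 0 (2 * π), a * (x₁ t : ℂ) + b * (x₂ t : ℂ) = 0 := by
  obtain ⟨hu, hv⟩ := sys_combo s lam hd1 hd2 heq1 heq2 hp1 hp2 a b μ hab1 hab2
  have hv0 : a * (x₁ 0 : ℂ) + b * (x₂ 0 : ℂ) = 0 := by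
    rcases mul_eq_zero.1 hv with h | h
    · exact absurd (by linear_combination h) hexp
    · exact h
  intro t ht
  rw [hu t ht, hv0, mul_zero]

lemma sys_const (s lam : ℝ) {x₁ x₂ : ℝ → ℝ} (hd1 : Differentiable ℝ x₁)
    (hd2 : Differentiable ℝ x₂)
    (heq1 : ∀ t ∈ Set.Icc 0 (2 * π), deriv x₁ t + x₁ t - s * x₁ t = lam * x₂ t)
    (heq2 : ∀ t ∈ Set.Icc 0 (2 * π), deriv x₂ t - x₂ t - s * x₂ t = -lam * x₁ t)
    (hp1 : x₁ 0 = x₁ (2 * π)) (hp2 : x₂ 0 = x₂ (2 * π))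
    (a b μ : ℂ) (hab1 : a * (s - 1) - b * lam = μ * a)
    (hab2 : a * lam + b * (s + 1) = μ * b)
    (hexp : Complex.exp (μ * ((2 * π : ℝ) : ℂ)) = 1 → μ = 0) :
    ∀ t ∈ Set.Icc 0 (2 * π), a * (x₁ t : ℂ) + b * (x₂ t : ℂ) =
      a * (x₁ 0 : ℂ) + b * (x₂ 0 : ℂ) := by
  obtain ⟨hu, hv⟩ := sys_combo s lam hd1 hd2 heq1 heq2 hp1 hp2 a b μ hab1 hab2
  by_cases h : Complex.exp (μ * ((2 * π : ℝ) : ℂ)) = 1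
  · intro t ht
    rw [hu t ht, hexp h]
    simp
  · have hv0 : a * (x₁ 0 : ℂ) + b * (x₂ 0 : ℂ) = 0 := by
      rcases mul_eq_zero.1 hv with h' | h'
      · exact absurd (by linear_combination h') h
      · exact h'
    intro t ht
    rw [hu t ht, hv0, mul_zero]

/-- In the degenerate case `λ² = 1`, `s ≠ 0`, any periodic solution vanishes. -/
lemma lamsq_one_zero (s lam : ℝ) (hlam : lam ^ 2 = 1) (hs : s ≠ 0) {x₁ x₂ : ℝ → ℝ}
    (hd1 : Differentiable ℝ x₁) (hd2 : Differentiable ℝ x₂)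
    (heq1 : ∀ t ∈ Set.Icc 0 (2 * π), deriv x₁ t + x₁ t - s * x₁ t = lam * x₂ t)
    (heq2 : ∀ t ∈ Set.Icc 0 (2 * π), deriv x₂ t - x₂ t - s * x₂ t = -lam * x₁ t)
    (hp1 : x₁ 0 = x₁ (2 * π)) (hp2 : x₂ 0 = x₂ (2 * π)) :
    ∀ t ∈ Set.Icc 0 (2 * π), x₁ t = 0 ∧ x₂ t = 0 := by
  have hsexp : Complex.exp ((s : ℂ) * ((2 * π : ℝ) : ℂ)) ≠ 1 :=
    fun h => hs ((exp_real_two_pi_eq_one_iff s).1 h)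
  have hlamC : (lam : ℂ) ^ 2 = 1 := by exact_mod_cast hlam
  have hu := sys_zero s lam hd1 hd2 heq1 heq2 hp1 hp2 (lam : ℂ) (-1) (s : ℂ)
    (by ring) (by linear_combination hlamC) hsexp
  -- x₂ = lam * x₁ on the interval
  have hx₂ : ∀ t ∈ Set.Icc 0 (2 * π), x₂ t = lam * x₁ t := by
    intro t ht
    have := hu t ht
    have : ((x₂ t : ℂ)) = (lam : ℂ) * (x₁ t : ℂ) := by linear_combination -this
    exact_mod_cast this
  -- scalar ODE for x₁
  have hX1d : ∀ t : ℝ, HasDerivAt (fun τ : ℝ => ((x₁ τ : ℝ) : ℂ)) ((deriv x₁ t : ℝ) : ℂ) t :=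
    fun t => (hd1 t).hasDerivAt.ofReal_comp
  have hX1 : ∀ t ∈ Set.Icc 0 (2 * π), deriv (fun τ : ℝ => ((x₁ τ : ℝ) : ℂ)) t
      = (s : ℂ) * ((x₁ t : ℝ) : ℂ) := by
    intro t ht
    rw [(hX1d t).deriv]
    have h := heq1 t ht
    rw [hx₂ t ht] at h
    have hr : deriv x₁ t = s * x₁ t := by
      have : lam * (lam * x₁ t) = x₁ t := by linear_combination (x₁ t) * hlam
      linarith
    rw [hr]; push_cast; ring
  have hE := exp_ode (fun t => (hX1d t).differentiableAt) hX1
  have hE2π := hE (2 * π) two_pi_mem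
  rw [← hp1] at hE2π
  have hx10 : ((x₁ 0 : ℝ) : ℂ) = 0 := by
    rcases mul_eq_zero.1 (show (Complex.exp ((s:ℂ) * ((2*π:ℝ):ℂ)) - 1) * ((x₁ 0 : ℝ) : ℂ) = 0
      by linear_combination -hE2π) with h | h
    · exact absurd (by linear_combination h) hsexp
    · exact h
  intro t ht
  have h1 : ((x₁ t : ℝ) : ℂ) = 0 := by rw [hE t ht, hx10, mul_zero]
  have h1' : x₁ t = 0 := by exact_mod_cast h1
  exact ⟨h1', by rw [hx₂ t ht, h1', mul_zero]⟩

open Real in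
/-- The periodic system `x₁' + x₁ − s x₁ = λ x₂`, `x₂' − x₂ − s x₂ = −λ x₁` on `[0, 2π]` with
`x₁(0) = x₁(2π)`, `x₂(0) = x₂(2π)`: (i) a nontrivial differentiable solution exists iff
`s² + λ² = 1`, or `s = 0` and `λ² = 1 + n²` for some positive integer `n`; (ii) if `s ≠ 0`
every solution is constant on `[0, 2π]`. -/
theorem coupled_periodic_system_solutions (s lam : ℝ) :
    ((∃ x₁ x₂ : ℝ → ℝ, Differentiable ℝ x₁ ∧ Differentiable ℝ x₂ ∧
        (∀ t ∈ Set.Icc 0 (2 * π), deriv x₁ t + x₁ t - s * x₁ t = lam * x₂ t) ∧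
        (∀ t ∈ Set.Icc 0 (2 * π), deriv x₂ t - x₂ t - s * x₂ t = -lam * x₁ t) ∧
        x₁ 0 = x₁ (2 * π) ∧ x₂ 0 = x₂ (2 * π) ∧
        ¬ (∀ t ∈ Set.Icc 0 (2 * π), x₁ t = 0 ∧ x₂ t = 0)) ↔
      (s ^ 2 + lam ^ 2 = 1 ∨ (s = 0 ∧ ∃ n : ℕ, 0 < n ∧ lam ^ 2 = 1 + (n : ℝ) ^ 2))) ∧
    (s ≠ 0 → ∀ x₁ x₂ : ℝ → ℝ, Differentiable ℝ x₁ → Differentiable ℝ x₂ →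
      (∀ t ∈ Set.Icc 0 (2 * π), deriv x₁ t + x₁ t - s * x₁ t = lam * x₂ t) →
      (∀ t ∈ Set.Icc 0 (2 * π), deriv x₂ t - x₂ t - s * x₂ t = -lam * x₁ t) →
      x₁ 0 = x₁ (2 * π) → x₂ 0 = x₂ (2 * π) →
      ∀ t ∈ Set.Icc 0 (2 * π), x₁ t = x₁ 0 ∧ x₂ t = x₂ 0) := by
  constructor
  · constructor
    · -- forward
      rintro ⟨x₁, x₂, hd1, hd2, heq1, heq2, hp1, hp2, hnt⟩
      by_contra hcon
      push_neg at hcon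
      obtain ⟨hc1, hc2⟩ := hcon
      apply hnt
      by_cases hl0 : lam = 0
      · -- decoupled
        have hσ1 : s - 1 ≠ 0 := by
          intro h; apply hc1
          have : s = 1 := by linarith
          rw [this, hl0]; ring
        have hσ2 : s + 1 ≠ 0 := by
          intro h; apply hc1
          have : s = -1 := by linarith
          rw [this, hl0]; ring
        have hexp1 : Complex.exp (((s : ℂ) - 1) * ((2 * π : ℝ) : ℂ)) ≠ 1 := by
          have hcast : (s : ℂ) - 1 = ((s - 1 : ℝ) : ℂ) := by push_cast; ring
          rw [hcast]
          exact fun h => hσ1 ((exp_real_two_pi_eq_one_iff (s - 1)).1 h)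
        have hexp2 : Complex.exp (((s : ℂ) + 1) * ((2 * π : ℝ) : ℂ)) ≠ 1 := by
          have hcast : (s : ℂ) + 1 = ((s + 1 : ℝ) : ℂ) := by push_cast; ring
          rw [hcast]
          exact fun h => hσ2 ((exp_real_two_pi_eq_one_iff (s + 1)).1 h)
        have hz1 := sys_zero s lam hd1 hd2 heq1 heq2 hp1 hp2 1 0 ((s : ℂ) - 1)
          (by ring) (by push_cast [hl0]; ring) hexp1
        have hz2 := sys_zero s lam hd1 hd2 heq1 heq2 hp1 hp2 0 1 ((s : ℂ) + 1)
          (by push_cast [hl0]; ring) (by ring) hexp2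
        intro t ht
        have e1 : ((x₁ t : ℝ) : ℂ) = 0 := by simpa using hz1 t ht
        have e2 : ((x₂ t : ℝ) : ℂ) = 0 := by simpa using hz2 t ht
        exact ⟨by exact_mod_cast e1, by exact_mod_cast e2⟩
      · by_cases hl1 : lam ^ 2 = 1
        · have hs : s ≠ 0 := fun h => hc1 (by rw [h, hl1]; ring)
          exact lamsq_one_zero s lam hl1 hs hd1 hd2 heq1 heq2 hp1 hp2
        · obtain ⟨ω, hω, hωne, heP, heM⟩ : ∃ ω : ℂ, ω ^ 2 = 1 - (lam : ℂ) ^ 2 ∧ ω ≠ 0 ∧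
              Complex.exp (((s : ℂ) + ω) * ((2 * π : ℝ) : ℂ)) ≠ 1 ∧
              Complex.exp (((s : ℂ) - ω) * ((2 * π : ℝ) : ℂ)) ≠ 1 := by
            rcases lt_trichotomy (lam ^ 2) 1 with hlt | heq | hgt
            · set r := Real.sqrt (1 - lam ^ 2) with hr
              have hr2 : r ^ 2 = 1 - lam ^ 2 := Real.sq_sqrt (by linarith)
              have hrpos : 0 < r := Real.sqrt_pos.2 (by linarith)
              refine ⟨(r : ℂ), ?_, Complex.ofReal_ne_zero.2 hrpos.ne', ?_, ?_⟩
              · rw [← Complex.ofReal_pow, hr2]; push_cast; ring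
              · have hcast : (s : ℂ) + (r : ℂ) = ((s + r : ℝ) : ℂ) := by push_cast; ring
                rw [hcast]
                intro h
                have h0 := (exp_real_two_pi_eq_one_iff (s + r)).1 h
                exact hc1 (by nlinarith [hr2])
              · have hcast : (s : ℂ) - (r : ℂ) = ((s - r : ℝ) : ℂ) := by push_cast; ring
                rw [hcast]
                intro h
                have h0 := (exp_real_two_pi_eq_one_iff (s - r)).1 h
                exact hc1 (by nlinarith [hr2])
            · exact absurd heq hl1
            · set c := Real.sqrt (lam ^ 2 - 1) with hcdef
              have hc2' : c ^ 2 = lam ^ 2 - 1 := Real.sq_sqrt (by linarith)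
              have hcpos : 0 < c := Real.sqrt_pos.2 (by linarith)
              refine ⟨(c : ℂ) * Complex.I, ?_,
                mul_ne_zero (Complex.ofReal_ne_zero.2 hcpos.ne') Complex.I_ne_zero, ?_, ?_⟩
              · rw [mul_pow, Complex.I_sq, ← Complex.ofReal_pow, hc2']; push_cast; ring
              · by_cases hs0 : s = 0
                · have hcast : (s : ℂ) + (c : ℂ) * Complex.I = (c : ℂ) * Complex.I := by
                    rw [hs0]; push_cast; ring
                  rw [hcast]
                  intro h
                  obtain ⟨n, hn⟩ := (exp_smul_I_two_pi_eq_one_iff c).1 h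
                  have hnR : (0 : ℝ) < (n : ℝ) := hn ▸ hcpos
                  have hnpos : (0 : ℤ) < n := by exact_mod_cast hnR
                  refine hc2 hs0 n.toNat (by omega) ?_
                  have hcast2 : ((n.toNat : ℕ) : ℝ) = (n : ℝ) := by
                    exact_mod_cast congrArg (Int.cast : ℤ → ℝ) (Int.toNat_of_nonneg hnpos.le)
                  rw [hcast2]
                  linear_combination (c + (n : ℝ)) * hn - hc2'
                · exact exp_ne_one_of_re_ne_zero (by simp [hs0])
              · by_cases hs0 : s = 0
                · have hcast : (s : ℂ) - (c : ℂ) * Complex.I = ((-c : ℝ) : ℂ) * Complex.I := by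
                    rw [hs0]; push_cast; ring
                  rw [hcast]
                  intro h
                  obtain ⟨n, hn⟩ := (exp_smul_I_two_pi_eq_one_iff (-c)).1 h
                  have hnR : (n : ℝ) < 0 := by rw [← hn]; linarith
                  have hnneg : n < 0 := by exact_mod_cast hnR
                  refine hc2 hs0 (-n).toNat (by omega) ?_
                  have hcast2 : (((-n).toNat : ℕ) : ℝ) = -(n : ℝ) := by
                    have := congrArg (Int.cast : ℤ → ℝ)
                      (Int.toNat_of_nonneg (by omega : (0 : ℤ) ≤ -n))
                    push_cast at this
                    exact_mod_cast this
                  rw [hcast2]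
                  linear_combination ((n : ℝ) - c) * hn - hc2'
                · exact exp_ne_one_of_re_ne_zero (by simp [hs0])
          have hzP := sys_zero s lam hd1 hd2 heq1 heq2 hp1 hp2 (lam : ℂ) (-(1 + ω))
            ((s : ℂ) + ω) (by ring) (by linear_combination hω) heP
          have hzM := sys_zero s lam hd1 hd2 heq1 heq2 hp1 hp2 (lam : ℂ) (-(1 - ω))
            ((s : ℂ) - ω) (by ring) (by linear_combination hω) heM
          intro t ht
          have hP := hzP t ht
          have hM := hzM t ht
          have h2 : (2 * ω) * ((x₂ t : ℝ) : ℂ) = 0 := by linear_combination hM - hP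
          have hx2 : ((x₂ t : ℝ) : ℂ) = 0 := by
            rcases mul_eq_zero.1 h2 with h | h
            · exact absurd (by simpa using h) hωne
            · exact h
          have hx1 : ((x₁ t : ℝ) : ℂ) = 0 := by
            have hlC : (lam : ℂ) ≠ 0 := Complex.ofReal_ne_zero.2 hl0
            have hm : (lam : ℂ) * ((x₁ t : ℝ) : ℂ) = 0 := by
              linear_combination hP + (1 + ω) * hx2
            rcases mul_eq_zero.1 hm with h | h
            · exact absurd h hlC
            · exact h
          exact ⟨by exact_mod_cast hx1, by exact_mod_cast hx2⟩
    · -- backward: construct solutions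
      rintro (hA | ⟨hs0, n, hn, hln⟩)
      · by_cases hdeg : lam = 0 ∧ s = 1
        · obtain ⟨hlz, hs1⟩ := hdeg
          refine ⟨fun _ => 1, fun _ => 0, differentiable_const 1, differentiable_const 0,
            ?_, ?_, rfl, rfl, ?_⟩
          · intro t ht; simp [hlz, hs1]
          · intro t ht; simp [hlz]
          · intro h; simpa using (h 0 zero_mem_pi).1
        · refine ⟨fun _ => lam, fun _ => 1 - s, differentiable_const _, differentiable_const _,
            ?_, ?_, rfl, rfl, ?_⟩
          · intro t ht; rw [deriv_const]; ring
          · intro t ht; rw [deriv_const]; linear_combination hA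
          · intro h
            obtain ⟨e1, e2⟩ := h 0 zero_mem_pi
            have e1' : lam = 0 := e1
            have e2' : 1 - s = 0 := e2
            exact hdeg ⟨e1', by linarith⟩
      · -- oscillatory solution
        have hid : ∀ t : ℝ, HasDerivAt (fun τ : ℝ => (n : ℝ) * τ) ((n : ℝ)) t := fun t => by
          simpa using (hasDerivAt_id t).const_mul (n : ℝ)
        have hc : ∀ t : ℝ, HasDerivAt (fun τ : ℝ => Real.cos ((n : ℝ) * τ))
            (-Real.sin ((n : ℝ) * t) * (n : ℝ)) t := fun t =>
          (Real.hasDerivAt_cos ((n : ℝ) * t)).comp t (hid t)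
        have hsin : ∀ t : ℝ, HasDerivAt (fun τ : ℝ => Real.sin ((n : ℝ) * τ))
            (Real.cos ((n : ℝ) * t) * (n : ℝ)) t := fun t =>
          (Real.hasDerivAt_sin ((n : ℝ) * t)).comp t (hid t)
        have hD1 : ∀ t, HasDerivAt (fun τ : ℝ => lam * Real.cos ((n : ℝ) * τ))
            (lam * (-Real.sin ((n : ℝ) * t) * (n : ℝ))) t := fun t => (hc t).const_mul lam
        have hD2 : ∀ t, HasDerivAt
            (fun τ : ℝ => Real.cos ((n : ℝ) * τ) - (n : ℝ) * Real.sin ((n : ℝ) * τ))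
            (-Real.sin ((n : ℝ) * t) * (n : ℝ) - (n : ℝ) * (Real.cos ((n : ℝ) * t) * (n : ℝ)))
            t := fun t => (hc t).sub ((hsin t).const_mul (n : ℝ))
        have hsin2π : Real.sin ((n : ℝ) * (2 * π)) = 0 := by
          have : (n : ℝ) * (2 * π) = ((2 * n : ℕ) : ℝ) * π := by push_cast; ring
          rw [this, Real.sin_nat_mul_pi]
        refine ⟨fun t => lam * Real.cos ((n : ℝ) * t),
          fun t => Real.cos ((n : ℝ) * t) - (n : ℝ) * Real.sin ((n : ℝ) * t),
          fun t => (hD1 t).differentiableAt, fun t => (hD2 t).differentiableAt,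
          ?_, ?_, ?_, ?_, ?_⟩
        · intro t ht
          rw [(hD1 t).deriv, hs0]
          ring
        · intro t ht
          rw [(hD2 t).deriv, hs0]
          linear_combination (Real.cos ((n : ℝ) * t)) * hln
        · show lam * Real.cos ((n : ℝ) * 0) = lam * Real.cos ((n : ℝ) * (2 * π))
          rw [mul_zero, Real.cos_zero, Real.cos_nat_mul_two_pi]
        · show Real.cos ((n : ℝ) * 0) - (n : ℝ) * Real.sin ((n : ℝ) * 0)
            = Real.cos ((n : ℝ) * (2 * π)) - (n : ℝ) * Real.sin ((n : ℝ) * (2 * π))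
          rw [mul_zero, Real.cos_zero, Real.sin_zero, Real.cos_nat_mul_two_pi, hsin2π]
        · intro h
          have h0 : lam * Real.cos ((n : ℝ) * 0) = 0 := (h 0 zero_mem_pi).1
          rw [mul_zero, Real.cos_zero, mul_one] at h0
          rw [h0] at hln
          nlinarith [sq_nonneg ((n : ℝ))]
  · -- part (ii)
    intro hs x₁ x₂ hd1 hd2 heq1 heq2 hp1 hp2
    by_cases hl0 : lam = 0
    · have H1 : Complex.exp (((s : ℂ) - 1) * ((2 * π : ℝ) : ℂ)) = 1 → (s : ℂ) - 1 = 0 := by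
        have hcast : (s : ℂ) - 1 = ((s - 1 : ℝ) : ℂ) := by push_cast; ring
        rw [hcast]; intro h
        have := (exp_real_two_pi_eq_one_iff (s - 1)).1 h
        exact_mod_cast this
      have H2 : Complex.exp (((s : ℂ) + 1) * ((2 * π : ℝ) : ℂ)) = 1 → (s : ℂ) + 1 = 0 := by
        have hcast : (s : ℂ) + 1 = ((s + 1 : ℝ) : ℂ) := by push_cast; ring
        rw [hcast]; intro h
        have := (exp_real_two_pi_eq_one_iff (s + 1)).1 h
        exact_mod_cast this
      have hC1 := sys_const s lam hd1 hd2 heq1 heq2 hp1 hp2 1 0 ((s : ℂ) - 1)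
        (by ring) (by push_cast [hl0]; ring) H1
      have hC2 := sys_const s lam hd1 hd2 heq1 heq2 hp1 hp2 0 1 ((s : ℂ) + 1)
        (by push_cast [hl0]; ring) (by ring) H2
      intro t ht
      have e1 : ((x₁ t : ℝ) : ℂ) = ((x₁ 0 : ℝ) : ℂ) := by simpa using hC1 t ht
      have e2 : ((x₂ t : ℝ) : ℂ) = ((x₂ 0 : ℝ) : ℂ) := by simpa using hC2 t ht
      exact ⟨by exact_mod_cast e1, by exact_mod_cast e2⟩
    · by_cases hl1 : lam ^ 2 = 1
      · have hz := lamsq_one_zero s lam hl1 hs hd1 hd2 heq1 heq2 hp1 hp2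
        intro t ht
        obtain ⟨a1, a2⟩ := hz t ht
        obtain ⟨b1, b2⟩ := hz 0 zero_mem_pi
        exact ⟨by rw [a1, b1], by rw [a2, b2]⟩
      · obtain ⟨ω, hω, hωne, HP, HM⟩ : ∃ ω : ℂ, ω ^ 2 = 1 - (lam : ℂ) ^ 2 ∧ ω ≠ 0 ∧
            (Complex.exp (((s : ℂ) + ω) * ((2 * π : ℝ) : ℂ)) = 1 → (s : ℂ) + ω = 0) ∧
            (Complex.exp (((s : ℂ) - ω) * ((2 * π : ℝ) : ℂ)) = 1 → (s : ℂ) - ω = 0) := by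
          rcases lt_trichotomy (lam ^ 2) 1 with hlt | heq | hgt
          · set r := Real.sqrt (1 - lam ^ 2) with hr
            have hr2 : r ^ 2 = 1 - lam ^ 2 := Real.sq_sqrt (by linarith)
            have hrpos : 0 < r := Real.sqrt_pos.2 (by linarith)
            refine ⟨(r : ℂ), ?_, Complex.ofReal_ne_zero.2 hrpos.ne', ?_, ?_⟩
            · rw [← Complex.ofReal_pow, hr2]; push_cast; ring
            · have hcast : (s : ℂ) + (r : ℂ) = ((s + r : ℝ) : ℂ) := by push_cast; ring
              rw [hcast]; intro h
              have := (exp_real_two_pi_eq_one_iff (s + r)).1 h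
              exact_mod_cast this
            · have hcast : (s : ℂ) - (r : ℂ) = ((s - r : ℝ) : ℂ) := by push_cast; ring
              rw [hcast]; intro h
              have := (exp_real_two_pi_eq_one_iff (s - r)).1 h
              exact_mod_cast this
          · exact absurd heq hl1
          · set c := Real.sqrt (lam ^ 2 - 1) with hcdef
            have hc2' : c ^ 2 = lam ^ 2 - 1 := Real.sq_sqrt (by linarith)
            have hcpos : 0 < c := Real.sqrt_pos.2 (by linarith)
            refine ⟨(c : ℂ) * Complex.I, ?_,
              mul_ne_zero (Complex.ofReal_ne_zero.2 hcpos.ne') Complex.I_ne_zero, ?_, ?_⟩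
            · rw [mul_pow, Complex.I_sq, ← Complex.ofReal_pow, hc2']; push_cast; ring
            · exact fun h => absurd h (exp_ne_one_of_re_ne_zero (by simp [hs]))
            · exact fun h => absurd h (exp_ne_one_of_re_ne_zero (by simp [hs]))
        have hCP := sys_const s lam hd1 hd2 heq1 heq2 hp1 hp2 (lam : ℂ) (-(1 + ω))
          ((s : ℂ) + ω) (by ring) (by linear_combination hω) HP
        have hCM := sys_const s lam hd1 hd2 heq1 heq2 hp1 hp2 (lam : ℂ) (-(1 - ω))
          ((s : ℂ) - ω) (by ring) (by linear_combination hω) HM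
        intro t ht
        have hP := hCP t ht
        have hM := hCM t ht
        have h2 : (2 * ω) * (((x₂ t : ℝ) : ℂ) - ((x₂ 0 : ℝ) : ℂ)) = 0 := by
          linear_combination hM - hP
        have hx2 : ((x₂ t : ℝ) : ℂ) = ((x₂ 0 : ℝ) : ℂ) := by
          rcases mul_eq_zero.1 h2 with h | h
          · exact absurd (by simpa using h) hωne
          · linear_combination h
        have hx1 : ((x₁ t : ℝ) : ℂ) = ((x₁ 0 : ℝ) : ℂ) := by
          have hlC : (lam : ℂ) ≠ 0 := Complex.ofReal_ne_zero.2 hl0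
          have hm : (lam : ℂ) * (((x₁ t : ℝ) : ℂ) - ((x₁ 0 : ℝ) : ℂ)) = 0 := by
            linear_combination hP + (1 + ω) * hx2
          rcases mul_eq_zero.1 hm with h | h
          · exact absurd h hlC
          · linear_combination h
        exact ⟨by exact_mod_cast hx1, by exact_mod_cast hx2⟩
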